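/- Let G, F be solid rearrangement-invariant sequence spaces with F:G ≠ l_∞. Then F:G = {ξ ∈ c_0 : ξ* η* ∈ F for all η ∈ G}. Consequently, F:G is itself a solid rearrangement-invariant space. -/

import Mathlib

open Filter Topology

noncomputable section

/-- Bounded real sequences. -/
def linf : Set (ℕ → ℝ) := {ξ | ∃ M : ℝ, ∀ n, |ξ n| ≤ M}

/-- Real sequences converging to zero. -/
def czero : Set (ℕ → ℝ) := {ξ | Tendsto ξ atTop (𝓝 0)}

/-- The decreasing rearrangement of a bounded sequence:
`ξ* n = inf {s ≥ 0 : #{k : |ξ k| > s} ≤ n}` (indexed from `0`). -/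
def dr (ξ : ℕ → ℝ) (n : ℕ) : ℝ :=
  sInf {s : ℝ | 0 ≤ s ∧ {k | s < |ξ k|}.Finite ∧ {k | s < |ξ k|}.ncard ≤ n}

/-- The doubling (dilation) operator `σ₂`, repeating each entry twice. -/
def sigma2 (ζ : ℕ → ℝ) (n : ℕ) : ℝ := ζ (n / 2)

/-- A solid rearrangement-invariant sequence space inside `l_∞`. -/
structure IsSRI (E : Set (ℕ → ℝ)) : Prop where
  nonzero : E ≠ {0}
  subset_linf : E ⊆ linf
  zero_mem : (0 : ℕ → ℝ) ∈ E
  add_mem : ∀ {ξ η : ℕ → ℝ}, ξ ∈ E → η ∈ E → ξ + η ∈ E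
  smul_mem : ∀ (c : ℝ) {ξ : ℕ → ℝ}, ξ ∈ E → c • ξ ∈ E
  solid : ∀ {ξ η : ℕ → ℝ}, η ∈ E → ξ ∈ linf → (∀ n, dr ξ n ≤ dr η n) → ξ ∈ E

/-- The `F`-dual (multiplier space) `F:G = {ξ ∈ l_∞ : ξη ∈ F for all η ∈ G}`. -/
def seqMul (F G : Set (ℕ → ℝ)) : Set (ℕ → ℝ) :=
  {ξ ∈ linf | ∀ η ∈ G, ξ * η ∈ F}

end

noncomputable section Helpers

def Sset (ξ : ℕ → ℝ) (n : ℕ) : Set ℝ :=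
  {s : ℝ | 0 ≤ s ∧ {k | s < |ξ k|}.Finite ∧ {k | s < |ξ k|}.ncard ≤ n}

lemma dr_def (ξ : ℕ → ℝ) (n : ℕ) : dr ξ n = sInf (Sset ξ n) := rfl

lemma Sset_bddBelow (ξ : ℕ → ℝ) (n : ℕ) : BddBelow (Sset ξ n) :=
  ⟨0, fun _ hs => hs.1⟩

lemma Sset_nonempty {ξ : ℕ → ℝ} (hξ : ξ ∈ linf) (n : ℕ) : (Sset ξ n).Nonempty := by
  obtain ⟨M, hM⟩ := hξ
  have hempty : {k | max M 0 < |ξ k|} = ∅ := by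
    ext k; simp only [Set.mem_setOf_eq, Set.mem_empty_iff_false, iff_false, not_lt]
    exact le_max_of_le_left (hM k)
  refine ⟨max M 0, le_max_right _ _, ?_, ?_⟩
  · rw [hempty]; exact Set.finite_empty
  · rw [hempty]; simp

lemma dr_nonneg (ξ : ℕ → ℝ) (n : ℕ) : 0 ≤ dr ξ n :=
  Real.sInf_nonneg (fun _ hs => hs.1)

lemma dr_le {ξ : ℕ → ℝ} {n : ℕ} {s : ℝ} (hs : s ∈ Sset ξ n) : dr ξ n ≤ s :=
  csInf_le (Sset_bddBelow ξ n) hs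

lemma le_dr {ξ : ℕ → ℝ} (hξ : ξ ∈ linf) {n : ℕ} {b : ℝ}
    (h : ∀ s ∈ Sset ξ n, b ≤ s) : b ≤ dr ξ n :=
  le_csInf (Sset_nonempty hξ n) h

/-- The infimum is attained: `dr ξ n` itself lies in the defining set. -/
lemma dr_mem {ξ : ℕ → ℝ} (hξ : ξ ∈ linf) (n : ℕ) : dr ξ n ∈ Sset ξ n := by
  refine ⟨dr_nonneg ξ n, ?_⟩
  by_contra hc
  -- get n+1 distinct elements of {k | dr ξ n < |ξ k|}
  have hbig : ∃ t : Finset ℕ, ↑t ⊆ {k | dr ξ n < |ξ k|} ∧ t.card = n + 1 := by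
    by_cases hfin : {k | dr ξ n < |ξ k|}.Finite
    · have hn : n + 1 ≤ {k | dr ξ n < |ξ k|}.ncard := by
        have h' := not_and.mp hc hfin
        omega
      obtain ⟨t, hts, htn⟩ := Set.exists_subset_card_eq hn
      have htf : t.Finite := hfin.subset hts
      refine ⟨htf.toFinset, by simpa using hts, ?_⟩
      rw [← htn, Set.ncard_eq_toFinset_card _ htf]
    · exact Set.Infinite.exists_subset_card_eq hfin (n + 1)
  obtain ⟨t, hts, htc⟩ := hbig
  have htne : t.Nonempty := Finset.card_pos.mp (by omega)
  set m : ℝ := t.inf' htne (fun k => |ξ k|) with hm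
  have hdm : dr ξ n < m := by
    rw [Finset.lt_inf'_iff]
    intro k hk; exact hts hk
  obtain ⟨s, hsS, hsm⟩ := exists_lt_of_csInf_lt (Sset_nonempty hξ n) hdm
  have hsub : ↑t ⊆ {k | s < |ξ k|} := by
    intro k hk
    have : m ≤ |ξ k| := Finset.inf'_le _ hk
    exact lt_of_lt_of_le hsm this
  have : n + 1 ≤ {k | s < |ξ k|}.ncard := by
    calc n + 1 = (↑t : Set ℕ).ncard := by rw [Set.ncard_coe_finset]; omega
    _ ≤ _ := Set.ncard_le_ncard hsub hsS.2.1
  have := hsS.2.2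
  omega

end Helpers

section More
lemma dr_antitone {ξ : ℕ → ℝ} (hξ : ξ ∈ linf) : Antitone (dr ξ) := by
  intro m n hmn
  show sInf (Sset ξ n) ≤ sInf (Sset ξ m)
  exact csInf_le_csInf (Sset_bddBelow ξ n) (Sset_nonempty hξ m)
    (fun s hs => ⟨hs.1, hs.2.1, le_trans hs.2.2 hmn⟩)

lemma dr_mono {ξ η : ℕ → ℝ} (h : ∀ k, |ξ k| ≤ |η k|) (hη : η ∈ linf) (n : ℕ) :
    dr ξ n ≤ dr η n := by
  refine csInf_le_csInf (Sset_bddBelow ξ n) (Sset_nonempty hη n) (fun s hs => ?_)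
  have hsub : {k | s < |ξ k|} ⊆ {k | s < |η k|} := fun k hk => lt_of_lt_of_le hk (h k)
  exact ⟨hs.1, hs.2.1.subset hsub, le_trans (Set.ncard_le_ncard hsub hs.2.1) hs.2.2⟩

lemma linf_of_antitone {ξ : ℕ → ℝ} (h0 : ∀ n, 0 ≤ ξ n) (ha : Antitone ξ) : ξ ∈ linf :=
  ⟨ξ 0, fun n => by rw [abs_of_nonneg (h0 n)]; exact ha (Nat.zero_le n)⟩

/-- dr of a nonnegative antitone sequence is itself. -/
lemma dr_of_antitone {ξ : ℕ → ℝ} (h0 : ∀ n, 0 ≤ ξ n) (ha : Antitone ξ) (n : ℕ) :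
    dr ξ n = ξ n := by
  apply le_antisymm
  · apply dr_le
    have hsub : {k | ξ n < |ξ k|} ⊆ Set.Iio n := by
      intro k hk
      simp only [Set.mem_setOf_eq, abs_of_nonneg (h0 k)] at hk
      by_contra hkn
      exact absurd (ha (not_lt.mp hkn)) (not_le.mpr hk)
    refine ⟨h0 n, (Set.finite_Iio n).subset hsub, ?_⟩
    calc {k | ξ n < |ξ k|}.ncard ≤ (Set.Iio n).ncard :=
          Set.ncard_le_ncard hsub (Set.finite_Iio n)
      _ = n := by rw [Set.ncard_eq_toFinset_card']; simp
  · refine le_dr (linf_of_antitone h0 ha) (fun s hs => ?_)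
    by_contra hlt
    push_neg at hlt
    have hsub : Set.Iic n ⊆ {k | s < |ξ k|} := by
      intro k hk
      simp only [Set.mem_setOf_eq, abs_of_nonneg (h0 k)]
      exact lt_of_lt_of_le hlt (ha hk)
    have : n + 1 ≤ {k | s < |ξ k|}.ncard := by
      calc n + 1 = (Set.Iic n).ncard := by rw [Set.ncard_eq_toFinset_card']; simp
        _ ≤ _ := Set.ncard_le_ncard hsub hs.2.1
    have := hs.2.2
    omega

lemma dr_smul_le {ξ : ℕ → ℝ} (hξ : ξ ∈ linf) (c : ℝ) (n : ℕ) :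
    dr (c • ξ) n ≤ |c| * dr ξ n := by
  obtain ⟨hd0, hfin, hcard⟩ := dr_mem hξ n
  apply dr_le
  have hset : {k | |c| * dr ξ n < |(c • ξ) k|} ⊆ {k | dr ξ n < |ξ k|} := by
    intro k hk
    simp only [Set.mem_setOf_eq, Pi.smul_apply, smul_eq_mul, abs_mul] at hk ⊢
    rcases eq_or_ne c 0 with rfl | hc
    · simp at hk
    · have hcpos : 0 < |c| := abs_pos.mpr hc
      exact (mul_lt_mul_iff_right₀ hcpos).mp hk
  exact ⟨mul_nonneg (abs_nonneg c) hd0, hfin.subset hset,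
    le_trans (Set.ncard_le_ncard hset hfin) hcard⟩

lemma linf_smul {ξ : ℕ → ℝ} (hξ : ξ ∈ linf) (c : ℝ) : c • ξ ∈ linf := by
  obtain ⟨M, hM⟩ := hξ
  exact ⟨|c| * M, fun n => by
    simp only [Pi.smul_apply, smul_eq_mul, abs_mul]
    exact mul_le_mul_of_nonneg_left (hM n) (abs_nonneg c)⟩

lemma dr_smul {ξ : ℕ → ℝ} (hξ : ξ ∈ linf) (c : ℝ) (n : ℕ) :
    dr (c • ξ) n = |c| * dr ξ n := by
  rcases eq_or_ne c 0 with rfl | hc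
  · simp only [abs_zero, zero_mul]
    apply le_antisymm _ (dr_nonneg _ n)
    have h := dr_smul_le hξ 0 n
    simpa using h
  · refine le_antisymm (dr_smul_le hξ c n) ?_
    have h2 := dr_smul_le (linf_smul hξ c) c⁻¹ n
    have hcc : c⁻¹ • c • ξ = ξ := by
      rw [smul_smul, inv_mul_cancel₀ hc, one_smul]
    rw [hcc, abs_inv] at h2
    have hcpos : 0 < |c| := abs_pos.mpr hc
    calc |c| * dr ξ n ≤ |c| * (|c|⁻¹ * dr (c • ξ) n) :=
          mul_le_mul_of_nonneg_left h2 (abs_nonneg c)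
      _ = dr (c • ξ) n := by field_simp

end More

section Place
/-- Placement along an injection preserves the decreasing rearrangement. -/
lemma dr_place {j : ℕ → ℕ} (hj : Function.Injective j) {ζ η : ℕ → ℝ}
    (hval : ∀ i, |η (j i)| = |ζ i|) (h0 : ∀ k, (¬ ∃ i, j i = k) → η k = 0) (n : ℕ) :
    dr η n = dr ζ n := by
  have hsets : ∀ s : ℝ, 0 ≤ s → {k | s < |η k|} = j '' {i | s < |ζ i|} := by
    intro s hs
    ext k
    simp only [Set.mem_setOf_eq, Set.mem_image]
    constructor
    · intro hk
      by_cases hex : ∃ i, j i = k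
      · obtain ⟨i, rfl⟩ := hex
        exact ⟨i, by rwa [← hval i], rfl⟩
      · rw [h0 k hex] at hk; simp at hk; linarith
    · rintro ⟨i, hi, rfl⟩
      rwa [hval i]
  have : Sset η n = Sset ζ n := by
    ext s
    by_cases hs : 0 ≤ s
    · simp only [Sset, Set.mem_setOf_eq, hsets s hs, hs, true_and]
      rw [Set.finite_image_iff hj.injOn, Set.ncard_image_of_injective _ hj]
    · simp only [Sset, Set.mem_setOf_eq]
      exact ⟨fun h => absurd h.1 hs, fun h => absurd h.1 hs⟩
  rw [dr_def, dr_def, this]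
end Place

section C0
lemma czero_subset_linf : czero ⊆ linf := by
  intro ξ hξ
  have h1 : ∀ᶠ n in atTop, |ξ n| < 1 := by
    have := Metric.tendsto_atTop.mp hξ 1 one_pos
    obtain ⟨N, hN⟩ := this
    refine eventually_atTop.mpr ⟨N, fun n hn => ?_⟩
    simpa [Real.dist_eq] using hN n hn
  obtain ⟨N, hN⟩ := eventually_atTop.mp h1
  refine ⟨max 1 ((Finset.range (N + 1)).sup' (by simp) fun k => |ξ k|), fun n => ?_⟩
  rcases lt_or_ge n N with hn | hn
  · have hmem : n ∈ Finset.range (N + 1) := Finset.mem_range.mpr (by omega)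
    exact le_max_of_le_right (Finset.le_sup' (fun k => |ξ k|) hmem)
  · exact le_max_of_le_left (le_of_lt (hN n hn))

lemma abs_le_dr_zero {ξ : ℕ → ℝ} (hξ : ξ ∈ linf) (k : ℕ) : |ξ k| ≤ dr ξ 0 := by
  refine le_dr hξ (fun s hs => ?_)
  by_contra hlt
  push_neg at hlt
  have hk : k ∈ {j | s < |ξ j|} := hlt
  have : 1 ≤ {j | s < |ξ j|}.ncard := by
    rw [Nat.one_le_iff_ne_zero, Ne, Set.ncard_eq_zero hs.2.1]
    exact Set.nonempty_iff_ne_empty.mp ⟨k, hk⟩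
  have := hs.2.2
  omega

lemma dr_tendsto_zero {ξ : ℕ → ℝ} (hξ : ξ ∈ czero) :
    Tendsto (dr ξ) atTop (𝓝 0) := by
  rw [Metric.tendsto_atTop]
  intro ε hε
  have h1 : ∀ᶠ n in atTop, |ξ n| < ε / 2 := by
    obtain ⟨N, hN⟩ := Metric.tendsto_atTop.mp hξ (ε / 2) (by linarith)
    exact eventually_atTop.mpr ⟨N, fun n hn => by simpa [Real.dist_eq] using hN n hn⟩
  obtain ⟨N, hN⟩ := eventually_atTop.mp h1
  have hfin : {k | ε / 2 < |ξ k|}.Finite := by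
    apply (Set.finite_Iio N).subset
    intro k hk
    simp only [Set.mem_setOf_eq] at hk
    by_contra hkN
    exact absurd (hN k (not_lt.mp hkN)) (not_lt.mpr (le_of_lt hk))
  refine ⟨{k | ε / 2 < |ξ k|}.ncard, fun n hn => ?_⟩
  have hle : dr ξ n ≤ ε / 2 := dr_le ⟨by linarith, hfin, hn⟩
  rw [Real.dist_eq, sub_zero, abs_of_nonneg (dr_nonneg ξ n)]
  linarith

lemma czero_of_dr {ξ : ℕ → ℝ} (hξ : ξ ∈ linf)
    (h : Tendsto (dr ξ) atTop (𝓝 0)) : ξ ∈ czero := by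
  rw [czero, Set.mem_setOf_eq, Metric.tendsto_atTop]
  intro ε hε
  obtain ⟨N, hN⟩ := Metric.tendsto_atTop.mp h ε hε
  have hd : dr ξ N < ε := by
    have := hN N (le_refl N)
    rw [Real.dist_eq, sub_zero, abs_of_nonneg (dr_nonneg ξ N)] at this
    exact this
  obtain ⟨-, hfin, -⟩ := dr_mem hξ N
  obtain ⟨B, hB⟩ := hfin.bddAbove
  refine ⟨B + 1, fun n hn => ?_⟩
  rw [Real.dist_eq, sub_zero]
  have hnD : n ∉ {k | dr ξ N < |ξ k|} := by
    intro hmem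
    have := hB hmem
    omega
  exact lt_of_le_of_lt (not_lt.mp hnD) hd

lemma linf_mul {ξ η : ℕ → ℝ} (hξ : ξ ∈ linf) (hη : η ∈ linf) : ξ * η ∈ linf := by
  obtain ⟨M, hM⟩ := hξ; obtain ⟨M', hM'⟩ := hη
  refine ⟨M * M', fun n => ?_⟩
  rw [Pi.mul_apply, abs_mul]
  exact mul_le_mul (hM n) (hM' n) (abs_nonneg _) (le_trans (abs_nonneg _) (hM n))

lemma linf_add {ξ η : ℕ → ℝ} (hξ : ξ ∈ linf) (hη : η ∈ linf) : ξ + η ∈ linf := by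
  obtain ⟨M, hM⟩ := hξ; obtain ⟨M', hM'⟩ := hη
  exact ⟨M + M', fun n => le_trans (abs_add_le _ _) (add_le_add (hM n) (hM' n))⟩

lemma dr_mul_le {ξ η : ℕ → ℝ} (hξ : ξ ∈ linf) (hη : η ∈ linf) (n : ℕ) :
    dr (ξ * η) n ≤ dr ξ (n / 2) * dr η (n / 2) := by
  obtain ⟨hd1, hf1, hc1⟩ := dr_mem hξ (n / 2)
  obtain ⟨hd2, hf2, hc2⟩ := dr_mem hη (n / 2)
  apply dr_le
  have hsub : {k | dr ξ (n/2) * dr η (n/2) < |(ξ * η) k|} ⊆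
      {k | dr ξ (n/2) < |ξ k|} ∪ {k | dr η (n/2) < |η k|} := by
    intro k hk
    simp only [Set.mem_setOf_eq, Pi.mul_apply, abs_mul, Set.mem_union] at hk ⊢
    by_contra hcon
    push_neg at hcon
    exact absurd (mul_le_mul hcon.1 hcon.2 (abs_nonneg _) hd1) (not_le.mpr hk)
  refine ⟨mul_nonneg hd1 hd2, (hf1.union hf2).subset hsub, ?_⟩
  calc {k | dr ξ (n/2) * dr η (n/2) < |(ξ * η) k|}.ncard
      ≤ ({k | dr ξ (n/2) < |ξ k|} ∪ {k | dr η (n/2) < |η k|}).ncard :=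
        Set.ncard_le_ncard hsub (hf1.union hf2)
    _ ≤ {k | dr ξ (n/2) < |ξ k|}.ncard + {k | dr η (n/2) < |η k|}.ncard :=
        Set.ncard_union_le _ _
    _ ≤ n / 2 + n / 2 := add_le_add hc1 hc2
    _ ≤ n := by omega
end C0

section Pick

open Classical in
noncomputable def next (ξ : ℕ → ℝ) (s : Finset ℕ) : ℕ :=
  if h : ∃ a, a ∉ s ∧ ∀ b ∉ s, |ξ b| ≤ |ξ a| then h.choose else 0

noncomputable def used (ξ : ℕ → ℝ) : ℕ → Finset ℕ :=
  fun n => Nat.rec ∅ (fun _ prev => insert (next ξ prev) prev) n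

lemma used_zero (ξ : ℕ → ℝ) : used ξ 0 = ∅ := rfl
lemma used_succ (ξ : ℕ → ℝ) (n : ℕ) :
    used ξ (n + 1) = insert (next ξ (used ξ n)) (used ξ n) := rfl

noncomputable def pick (ξ : ℕ → ℝ) (i : ℕ) : ℕ := next ξ (used ξ i)

variable {ξ : ℕ → ℝ}

lemma exists_max (hξ : ξ ∈ czero) (s : Finset ℕ) :
    ∃ a, a ∉ s ∧ ∀ b ∉ s, |ξ b| ≤ |ξ a| := by
  have hA : ((↑s : Set ℕ)ᶜ).Infinite := (s.finite_toSet).infinite_compl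
  obtain ⟨a₀, ha₀⟩ := hA.nonempty
  by_cases hz : ∀ b ∉ s, ξ b = 0
  · refine ⟨a₀, ha₀, fun b hb => ?_⟩
    rw [hz b hb, hz a₀ ha₀]
  · push_neg at hz
    obtain ⟨a₁, ha₁s, ha₁⟩ := hz
    set T : Set ℕ := {k | k ∉ s ∧ |ξ a₁| ≤ |ξ k|} with hT
    have hTfin : T.Finite := by
      have h1 : ∀ᶠ n in atTop, |ξ n| < |ξ a₁| := by
        obtain ⟨N, hN⟩ := Metric.tendsto_atTop.mp hξ |ξ a₁| (abs_pos.mpr ha₁)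
        exact eventually_atTop.mpr ⟨N, fun n hn => by simpa [Real.dist_eq] using hN n hn⟩
      obtain ⟨N, hN⟩ := eventually_atTop.mp h1
      apply (Set.finite_Iio N).subset
      intro k hk
      by_contra hkN
      exact absurd hk.2 (not_le.mpr (hN k (not_lt.mp hkN)))
    have hTne : T.Nonempty := ⟨a₁, ha₁s, le_refl _⟩
    obtain ⟨a, haT, ha⟩ := Set.exists_max_image T (fun k => |ξ k|) hTfin hTne
    refine ⟨a, haT.1, fun b hb => ?_⟩
    rcases le_or_gt |ξ a₁| |ξ b| with hc | hc
    · exact ha b ⟨hb, hc⟩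
    · exact le_of_lt (lt_of_lt_of_le hc haT.2)

lemma next_spec (hξ : ξ ∈ czero) (s : Finset ℕ) :
    next ξ s ∉ s ∧ ∀ b ∉ s, |ξ b| ≤ |ξ (next ξ s)| := by
  rw [next]
  rw [dif_pos (exists_max hξ s)]
  exact (exists_max hξ s).choose_spec

lemma used_card (hξ : ξ ∈ czero) (n : ℕ) : (used ξ n).card = n := by
  induction n with
  | zero => rfl
  | succ n ih =>
    rw [used_succ, Finset.card_insert_of_notMem (next_spec hξ (used ξ n)).1, ih]

lemma used_subset (i j : ℕ) (hij : i ≤ j) : used ξ i ⊆ used ξ j := by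
  induction j with
  | zero => simp_all
  | succ j ih =>
    rcases Nat.lt_or_ge i (j+1) with hlt | hge
    · exact (ih (by omega)).trans (Finset.subset_insert _ _)
    · have : i = j + 1 := by omega
      subst this; rfl

lemma pick_mem_used {i j : ℕ} (hij : i < j) : pick ξ i ∈ used ξ j := by
  have : pick ξ i ∈ used ξ (i + 1) := Finset.mem_insert_self _ _
  exact used_subset _ _ hij this

lemma mem_used {x n : ℕ} (hx : x ∈ used ξ n) : ∃ j < n, x = pick ξ j := by
  induction n with
  | zero => rw [used_zero] at hx; simp at hx
  | succ n ih =>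
    rw [used_succ, Finset.mem_insert] at hx
    rcases hx with rfl | hx
    · exact ⟨n, by omega, rfl⟩
    · obtain ⟨j, hj, rfl⟩ := ih hx
      exact ⟨j, by omega, rfl⟩

lemma pick_injective (hξ : ξ ∈ czero) : Function.Injective (pick ξ) := by
  intro i j hij
  by_contra hne
  wlog hlt : i < j generalizing i j
  · exact this hij.symm (Ne.symm hne) (by omega)
  have h1 : pick ξ i ∈ used ξ j := pick_mem_used hlt
  rw [hij] at h1
  exact (next_spec hξ (used ξ j)).1 h1

lemma pick_abs_antitone (hξ : ξ ∈ czero) : Antitone (fun i => |ξ (pick ξ i)|) := by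
  apply antitone_nat_of_succ_le
  intro i
  have h1 : pick ξ (i+1) ∉ used ξ (i+1) := (next_spec hξ (used ξ (i+1))).1
  have h2 : pick ξ (i+1) ∉ used ξ i := fun hc => h1 (used_subset _ _ (by omega) hc)
  exact (next_spec hξ (used ξ i)).2 _ h2

lemma dr_eq_pick (hξ : ξ ∈ czero) (i : ℕ) : dr ξ i = |ξ (pick ξ i)| := by
  apply le_antisymm
  · apply dr_le
    have hsub : {k | |ξ (pick ξ i)| < |ξ k|} ⊆ ↑(used ξ i) := by
      intro k hk
      by_contra hkused
      exact absurd ((next_spec hξ (used ξ i)).2 k hkused) (not_le.mpr hk)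
    refine ⟨abs_nonneg _, (used ξ i).finite_toSet.subset hsub, ?_⟩
    calc {k | |ξ (pick ξ i)| < |ξ k|}.ncard ≤ (↑(used ξ i) : Set ℕ).ncard :=
          Set.ncard_le_ncard hsub (used ξ i).finite_toSet
      _ = i := by rw [Set.ncard_coe_finset, used_card hξ]
  · refine le_dr (czero_subset_linf hξ) (fun s hs => ?_)
    by_contra hlt
    push_neg at hlt
    have hsub : ↑(used ξ (i+1)) ⊆ {k | s < |ξ k|} := by
      intro x hx
      obtain ⟨j, hj, rfl⟩ := mem_used hx
      have : |ξ (pick ξ i)| ≤ |ξ (pick ξ j)| := pick_abs_antitone hξ (by omega : j ≤ i)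
      exact lt_of_lt_of_le hlt this
    have : i + 1 ≤ {k | s < |ξ k|}.ncard := by
      calc i + 1 = (↑(used ξ (i+1)) : Set ℕ).ncard := by
            rw [Set.ncard_coe_finset, used_card hξ]
        _ ≤ _ := Set.ncard_le_ncard hsub hs.2.1
    have := hs.2.2
    omega
end Pick

section Extend

lemma extend_linf {e : ℕ → ℕ} {ζ : ℕ → ℝ} (h0 : ∀ n, 0 ≤ ζ n) (ha : Antitone ζ) :
    Function.extend e ζ (fun _ => 0) ∈ linf := by
  classical
  refine ⟨ζ 0, fun k => ?_⟩
  rw [Function.extend_def]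
  split
  · rw [abs_of_nonneg (h0 _)]; exact ha (Nat.zero_le _)
  · simpa using h0 0

lemma dr_extend {e : ℕ → ℕ} (he : Function.Injective e) {ζ : ℕ → ℝ}
    (h0 : ∀ i, 0 ≤ ζ i) (n : ℕ) :
    dr (Function.extend e ζ (fun _ => 0)) n = dr ζ n := by
  apply dr_place he (ζ := ζ) (η := Function.extend e ζ (fun _ => 0))
  · intro i
    rw [he.extend_apply]
  · intro k hk
    exact Function.extend_apply' _ _ _ hk

/-- Placement of the decreasing rearrangement of a member of a solid r.i. space along an
injection stays in the space. -/
lemma place_mem_of_sri {G : Set (ℕ → ℝ)} (hG : IsSRI G) {η : ℕ → ℝ} (hη : η ∈ G)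
    {e : ℕ → ℕ} (he : Function.Injective e) :
    Function.extend e (dr η) (fun _ => 0) ∈ G ∧
      ∀ n, dr (Function.extend e (dr η) (fun _ => 0)) n = dr η n := by
  have hηl : η ∈ linf := hG.subset_linf hη
  have heq : ∀ n, dr (Function.extend e (dr η) (fun _ => 0)) n = dr η n := by
    intro n
    rw [dr_extend he (dr_nonneg η), dr_of_antitone (dr_nonneg η) (dr_antitone hηl)]
  exact ⟨hG.solid hη (extend_linf (dr_nonneg η) (dr_antitone hηl)) (fun n => le_of_eq (heq n)),
    heq⟩

lemma exists_infinite_of_not_czero {ξ : ℕ → ℝ} (h : ξ ∉ czero) :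
    ∃ ε > 0, {k | ε ≤ |ξ k|}.Infinite := by
  rw [czero, Set.mem_setOf_eq, Metric.tendsto_atTop] at h
  push_neg at h
  obtain ⟨ε, hε, hfreq⟩ := h
  refine ⟨ε, hε, ?_⟩
  rw [← Nat.frequently_atTop_iff_infinite, frequently_atTop]
  intro N
  obtain ⟨n, hn, hdn⟩ := hfreq N
  exact ⟨n, hn, by rwa [Real.dist_eq, sub_zero] at hdn⟩

end Extend

section Main

variable {F G : Set (ℕ → ℝ)}

/-- If the multiplier space contains an element not in `c₀`, it is all of `l_∞`. -/
lemma seqMul_eq_linf (hF : IsSRI F) (hG : IsSRI G) {ξ : ℕ → ℝ}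
    (hξ : ξ ∈ seqMul F G) (hξc : ξ ∉ czero) : seqMul F G = linf := by
  obtain ⟨ε, hε, hAinf⟩ := exists_infinite_of_not_czero hξc
  set A := {k | ε ≤ |ξ k|} with hA
  set emb := hAinf.natEmbedding with hemb
  set e : ℕ → ℕ := fun i => (emb i : ℕ) with he_def
  have he : Function.Injective e := fun a b hab => emb.injective (Subtype.ext hab)
  have he_mem : ∀ i, ε ≤ |ξ (e i)| := fun i => (emb i).2
  have hξl : ξ ∈ linf := hξ.1
  apply Set.Subset.antisymm (fun ζ hζ => hζ.1)
  intro ζ hζl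
  obtain ⟨M, hM⟩ := id hζl
  set M0 : ℝ := max M 0 with hM0
  have hM0' : ∀ k, |ζ k| ≤ M0 := fun k => le_max_of_le_left (hM k)
  have hM0nn : 0 ≤ M0 := le_max_right _ _
  refine ⟨hζl, fun η hη => ?_⟩
  have hηl : η ∈ linf := hG.subset_linf hη
  set η' := Function.extend e (dr η) (fun _ => 0) with hη'def
  obtain ⟨hη'G, -⟩ := place_mem_of_sri hG hη he
  have hη'l : η' ∈ linf := extend_linf (dr_nonneg η) (dr_antitone hηl)
  have hw : ξ * η' ∈ F := hξ.2 η' hη'G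
  have hwl : ξ * η' ∈ linf := linf_mul hξl hη'l
  -- `ε ⬝ η* ≤ dr (ξ η')`
  have hτ : ∀ n, ε * dr η n ≤ dr (ξ * η') n := by
    intro n
    set τ : ℕ → ℝ := Function.extend e (fun i => ε * dr η i) (fun _ => 0) with hτdef
    have h0 : ∀ i, 0 ≤ ε * dr η i := fun i => mul_nonneg (le_of_lt hε) (dr_nonneg η i)
    have ha : Antitone (fun i => ε * dr η i) := fun i j hij =>
      mul_le_mul_of_nonneg_left (dr_antitone hηl hij) (le_of_lt hε)
    have h1 : dr τ n = ε * dr η n := by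
      rw [hτdef, dr_extend he h0, dr_of_antitone h0 ha]
    rw [← h1]
    apply dr_mono _ hwl
    intro k
    by_cases hex : ∃ i, e i = k
    · obtain ⟨i, rfl⟩ := hex
      simp only [hτdef, hη'def, Pi.mul_apply, he.extend_apply, abs_mul, abs_of_pos hε,
        abs_of_nonneg (dr_nonneg η i)]
      exact mul_le_mul_of_nonneg_right (he_mem i) (dr_nonneg η i)
    · rw [hτdef, Function.extend_apply' _ _ _ hex]
      simpa using abs_nonneg ((ξ * η') k)
  -- conclude
  refine hF.solid (η := (M0 / ε) • (ξ * η')) (hF.smul_mem _ hw) (linf_mul hζl hηl) ?_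
  intro n
  have h2 : dr (ζ * η) n ≤ M0 * dr η n := by
    have := dr_mono (ξ := ζ * η) (η := M0 • η) ?_ (linf_smul hηl M0) n
    · rwa [dr_smul hηl M0 n, abs_of_nonneg hM0nn] at this
    · intro k
      rw [Pi.mul_apply, abs_mul, Pi.smul_apply, smul_eq_mul, abs_mul, abs_of_nonneg hM0nn]
      exact mul_le_mul_of_nonneg_right (hM0' k) (abs_nonneg _)
  have h3 : M0 * dr η n = (M0 / ε) * (ε * dr η n) := by
    field_simp
  calc dr (ζ * η) n ≤ M0 * dr η n := h2
    _ = (M0 / ε) * (ε * dr η n) := h3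
    _ ≤ (M0 / ε) * dr (ξ * η') n :=
        mul_le_mul_of_nonneg_left (hτ n) (div_nonneg hM0nn (le_of_lt hε))
    _ = dr ((M0 / ε) • (ξ * η')) n := by
        rw [dr_smul hwl _ n, abs_of_nonneg (div_nonneg hM0nn (le_of_lt hε))]

end Main

/-- For solid rearrangement-invariant sequence spaces `G, F` with
`F:G ≠ l_∞`, the multiplier space is
`F:G = {ξ ∈ c₀ : ξ* η* ∈ F for all η ∈ G}`; consequently `F:G` is itself a solid
rearrangement-invariant space. -/
theorem statement14 (F G : Set (ℕ → ℝ)) (hF : IsSRI F) (hG : IsSRI G)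
    (h : seqMul F G ≠ linf) :
    seqMul F G = {ξ | ξ ∈ czero ∧ ∀ η ∈ G, (fun n => dr ξ n * dr η n) ∈ F} ∧
    IsSRI (seqMul F G) := by
  -- every member of the multiplier space lies in c₀
  have hc0 : ∀ ξ ∈ seqMul F G, ξ ∈ czero := by
    intro ξ hξ
    by_contra hc
    exact h (seqMul_eq_linf hF hG hξ hc)
  -- the set equality
  have key : seqMul F G = {ξ | ξ ∈ czero ∧ ∀ η ∈ G, (fun n => dr ξ n * dr η n) ∈ F} := by
    ext ξ
    constructor
    · -- forward direction
      intro hξ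
      have hξc : ξ ∈ czero := hc0 ξ hξ
      have hξl : ξ ∈ linf := hξ.1
      refine ⟨hξc, fun η hη => ?_⟩
      have hηl : η ∈ linf := hG.subset_linf hη
      have hpinj : Function.Injective (pick ξ) := pick_injective hξc
      obtain ⟨hη'G, -⟩ := place_mem_of_sri hG hη hpinj
      set η' := Function.extend (pick ξ) (dr η) (fun _ => 0) with hη'def
      have hw : ξ * η' ∈ F := hξ.2 η' hη'G
      set ζ : ℕ → ℝ := fun n => dr ξ n * dr η n with hζdef
      have hζ0 : ∀ n, 0 ≤ ζ n := fun n => mul_nonneg (dr_nonneg ξ n) (dr_nonneg η n)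
      have hζa : Antitone ζ := fun i j hij =>
        mul_le_mul (dr_antitone hξl hij) (dr_antitone hηl hij) (dr_nonneg η j)
          (dr_nonneg ξ i)
      have heq : ∀ n, dr (ξ * η') n = dr ζ n := by
        apply dr_place hpinj
        · intro i
          simp only [hζdef, Pi.mul_apply, hη'def, hpinj.extend_apply, abs_mul,
            abs_of_nonneg (dr_nonneg η i), abs_of_nonneg (dr_nonneg ξ i), abs_abs]
          rw [dr_eq_pick hξc i]
        · intro k hk
          rw [Pi.mul_apply, hη'def, Function.extend_apply' _ _ _ hk, mul_zero]
      exact hF.solid hw (linf_of_antitone hζ0 hζa) (fun n => by rw [← heq n])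
    · -- backward direction
      rintro ⟨hξc, hmul⟩
      have hξl : ξ ∈ linf := czero_subset_linf hξc
      refine ⟨hξl, fun η hη => ?_⟩
      have hηl : η ∈ linf := hG.subset_linf hη
      set ζ : ℕ → ℝ := fun n => dr ξ n * dr η n with hζdef
      have hζF : ζ ∈ F := hmul η hη
      have hζ0 : ∀ n, 0 ≤ ζ n := fun n => mul_nonneg (dr_nonneg ξ n) (dr_nonneg η n)
      have hζa : Antitone ζ := fun i j hij =>
        mul_le_mul (dr_antitone hξl hij) (dr_antitone hηl hij) (dr_nonneg η j)
          (dr_nonneg ξ i)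
      -- the two shifted copies
      have hinj2 : Function.Injective (fun i : ℕ => 2 * i) := fun a b hab => by
        simp only [] at hab; omega
      have hinj2' : Function.Injective (fun i : ℕ => 2 * i + 1) := fun a b hab => by
        simp only [] at hab; omega
      set ζe := Function.extend (fun i : ℕ => 2 * i) ζ (fun _ => 0) with hζedef
      set ζo := Function.extend (fun i : ℕ => 2 * i + 1) ζ (fun _ => 0) with hζodef
      have hζeF : ζe ∈ F := hF.solid hζF (extend_linf hζ0 hζa)
        (fun n => le_of_eq (dr_extend hinj2 hζ0 n))
      have hζoF : ζo ∈ F := hF.solid hζF (extend_linf hζ0 hζa)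
        (fun n => le_of_eq (dr_extend hinj2' hζ0 n))
      have hσF : ζe + ζo ∈ F := hF.add_mem hζeF hζoF
      have hσ : ∀ n, (ζe + ζo) n = ζ (n / 2) := by
        intro n
        rcases Nat.even_or_odd n with ⟨m, rfl⟩ | ⟨m, rfl⟩
        · have h1 : ζe (m + m) = ζ m := by
            have : m + m = 2 * m := by omega
            rw [this, hζedef, hinj2.extend_apply]
          have h2 : ζo (m + m) = 0 := by
            rw [hζodef, Function.extend_apply' _ _ _ (by omega : ¬ ∃ i, 2 * i + 1 = m + m)]
          rw [Pi.add_apply, h1, h2, add_zero]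
          congr 1
          omega
        · have h1 : ζe (2 * m + 1) = 0 := by
            rw [hζedef, Function.extend_apply' _ _ _ (by omega : ¬ ∃ i, 2 * i = 2 * m + 1)]
          have h2 : ζo (2 * m + 1) = ζ m := by
            rw [hζodef, hinj2'.extend_apply]
          rw [Pi.add_apply, h1, h2, zero_add]
          congr 1
          omega
      have hσ0 : ∀ n, 0 ≤ (ζe + ζo) n := fun n => by rw [hσ n]; exact hζ0 _
      have hσa : Antitone (ζe + ζo) := fun i j hij => by
        rw [hσ i, hσ j]; exact hζa (Nat.div_le_div_right hij)
      refine hF.solid hσF (linf_mul hξl hηl) (fun n => ?_)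
      rw [dr_of_antitone hσ0 hσa, hσ n]
      exact dr_mul_le hξl hηl n
  refine ⟨key, ?_, fun ξ hξ => hξ.1, ?_, ?_, ?_, ?_⟩
  · -- nonzero
    set e₀ : ℕ → ℝ := fun n => if n = 0 then 1 else 0 with he₀
    have he₀l : e₀ ∈ linf := ⟨1, fun n => by by_cases hn : n = 0 <;> simp [he₀, hn]⟩
    have he₀mem : e₀ ∈ seqMul F G := by
      refine ⟨he₀l, fun η hη => ?_⟩
      have hηl : η ∈ linf := hG.subset_linf hη
      -- find a nonzero element of F
      have hFnz : ∃ ζ₀ ∈ F, ζ₀ ≠ 0 := by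
        by_contra hcon
        push_neg at hcon
        exact hF.nonzero (Set.Subset.antisymm (fun ζ hζ => hcon ζ hζ)
          (fun ζ hζ => by rw [Set.mem_singleton_iff] at hζ; rw [hζ]; exact hF.zero_mem))
      obtain ⟨ζ₀, hζ₀F, hζ₀⟩ := hFnz
      obtain ⟨k₀, hk₀⟩ := Function.ne_iff.mp hζ₀
      have hk₀' : (0:ℝ) < |ζ₀ k₀| := abs_pos.mpr hk₀
      set c : ℝ := |η 0| / |ζ₀ k₀| with hc
      have hcnn : 0 ≤ c := div_nonneg (abs_nonneg _) (abs_nonneg _)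
      have hcin : c • ζ₀ ∈ F := hF.smul_mem c hζ₀F
      have hcl : c • ζ₀ ∈ linf := hF.subset_linf hcin
      refine hF.solid hcin (linf_mul he₀l hηl) (fun n => ?_)
      match n with
      | 0 =>
        have h1 : dr (e₀ * η) 0 ≤ |η 0| := by
          apply dr_le
          have hempty : {k | |η 0| < |(e₀ * η) k|} = ∅ := by
            ext k
            simp only [Set.mem_setOf_eq, Set.mem_empty_iff_false, iff_false, not_lt]
            rw [Pi.mul_apply, he₀]
            rcases Nat.eq_zero_or_pos k with rfl | hk
            · simp
            · have : k ≠ 0 := by omega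
              simp [this]
          refine ⟨abs_nonneg _, ?_, ?_⟩
          · rw [hempty]; exact Set.finite_empty
          · rw [hempty]; simp
        have h2 : |η 0| ≤ dr (c • ζ₀) 0 := by
          have := abs_le_dr_zero hcl k₀
          rw [Pi.smul_apply, smul_eq_mul, abs_mul, abs_of_nonneg hcnn, hc,
            div_mul_cancel₀ _ (ne_of_gt hk₀')] at this
          exact this
        exact le_trans h1 h2
      | Nat.succ m =>
        have h1 : dr (e₀ * η) (m + 1) ≤ 0 := by
          apply dr_le
          have hsub : {k | (0:ℝ) < |(e₀ * η) k|} ⊆ {0} := by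
            intro k hk
            simp only [Set.mem_setOf_eq, Pi.mul_apply, he₀] at hk
            by_contra hk0
            simp only [Set.mem_singleton_iff] at hk0
            simp [hk0] at hk
          refine ⟨le_refl 0, (Set.finite_singleton 0).subset hsub, ?_⟩
          calc {k | (0:ℝ) < |(e₀ * η) k|}.ncard ≤ ({0} : Set ℕ).ncard :=
                Set.ncard_le_ncard hsub (Set.finite_singleton 0)
            _ = 1 := Set.ncard_singleton 0
            _ ≤ m + 1 := by omega
        exact le_trans h1 (dr_nonneg _ _)
    intro hcon
    rw [hcon, Set.mem_singleton_iff] at he₀mem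
    have := congrFun he₀mem 0
    simp [he₀] at this
  · -- zero_mem
    refine ⟨⟨0, fun n => by simp⟩, fun η hη => ?_⟩
    have : (0 : ℕ → ℝ) * η = 0 := by funext k; simp
    rw [this]
    exact hF.zero_mem
  · -- add_mem
    intro ξ ξ' hξ hξ'
    refine ⟨linf_add hξ.1 hξ'.1, fun η hη => ?_⟩
    have : (ξ + ξ') * η = ξ * η + ξ' * η := by funext k; simp [add_mul]
    rw [this]
    exact hF.add_mem (hξ.2 η hη) (hξ'.2 η hη)
  · -- smul_mem
    intro c ξ hξ
    refine ⟨linf_smul hξ.1 c, fun η hη => ?_⟩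
    have : (c • ξ) * η = c • (ξ * η) := by
      funext k; simp [mul_assoc]
    rw [this]
    exact hF.smul_mem c (hξ.2 η hη)
  · -- solid
    intro ξ η₀ hη₀ hξl hle
    rw [key] at hη₀ ⊢
    obtain ⟨hη₀c, hη₀m⟩ := hη₀
    constructor
    · exact czero_of_dr hξl (tendsto_of_tendsto_of_tendsto_of_le_of_le tendsto_const_nhds
        (dr_tendsto_zero hη₀c) (fun n => dr_nonneg ξ n) hle)
    · intro η hη
      have hηl : η ∈ linf := hG.subset_linf hη
      have hη₀l : η₀ ∈ linf := czero_subset_linf hη₀c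
      have hζ₀F : (fun n => dr η₀ n * dr η n) ∈ F := hη₀m η hη
      have h0ξ : ∀ n, 0 ≤ dr ξ n * dr η n := fun n =>
        mul_nonneg (dr_nonneg ξ n) (dr_nonneg η n)
      have h0η₀ : ∀ n, 0 ≤ dr η₀ n * dr η n := fun n =>
        mul_nonneg (dr_nonneg η₀ n) (dr_nonneg η n)
      have haξ : Antitone (fun n => dr ξ n * dr η n) := fun i j hij =>
        mul_le_mul (dr_antitone hξl hij) (dr_antitone hηl hij) (dr_nonneg η j)
          (dr_nonneg ξ i)
      have haη₀ : Antitone (fun n => dr η₀ n * dr η n) := fun i j hij =>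
        mul_le_mul (dr_antitone hη₀l hij) (dr_antitone hηl hij) (dr_nonneg η j)
          (dr_nonneg η₀ i)
      refine hF.solid hζ₀F (linf_of_antitone h0ξ haξ) (fun n => ?_)
      rw [dr_of_antitone h0ξ haξ, dr_of_antitone h0η₀ haη₀]
      exact mul_le_mul_of_nonneg_right (hle n) (dr_nonneg η n)
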